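/- Let D be a Young diagram with qx + py \leq Kpq - p - q for all (x,y) \in D (p, q coprime positive, K positive, P = Kp, Q = Kq). Then mid_{q/p}(D) = |D| - |{c \in D : p·l(c) \geq q·(a(c)+1)}| - |{c \in R_{P,Q} \ D : q·a(c) \geq p·(l(c)+1)}| + |R^+_{P,Q} \ D|, where mid_{q/p}(D) = |{c \in D : p·l(c) < q·(a(c)+1) and q·a(c) < p·(l(c)+1)}|, R^+_{P,Q} = {(x,y) \in (Z_{\geq 0})^2 : qx + py \leq Kpq - p - q}, and R_{P,Q} = {0,...,P-1} \times {0,...,Q-1}. -/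

import Mathlib

/-- A Young diagram: a finite down-closed subset of ℕ². -/
def IsYoung (D : Finset (ℕ × ℕ)) : Prop :=
  ∀ x y x' y', (x, y) ∈ D → x' ≤ x → y' ≤ y → (x', y') ∈ D

/-- Arm length of a box inside the diagram. -/
def arm (D : Finset (ℕ × ℕ)) (c : ℕ × ℕ) : ℕ :=
  (D.filter fun d => d.2 = c.2 ∧ c.1 < d.1).card

/-- Leg length of a box inside the diagram. -/
def leg (D : Finset (ℕ × ℕ)) (c : ℕ × ℕ) : ℕ :=
  (D.filter fun d => d.1 = c.1 ∧ c.2 < d.2).card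

/-- Arm length of a box in the complement of the diagram. -/
def coArm (D : Finset (ℕ × ℕ)) (c : ℕ × ℕ) : ℕ :=
  ((Finset.range c.1).filter fun x' => (x', c.2) ∉ D).card

/-- Leg length of a box in the complement of the diagram. -/
def coLeg (D : Finset (ℕ × ℕ)) (c : ℕ × ℕ) : ℕ :=
  ((Finset.range c.2).filter fun y' => (c.1, y') ∉ D).card


namespace Mid

open Finset


open Finset

/-- length of row y -/
def rlen (D : Finset (ℕ × ℕ)) (y : ℕ) : ℕ := (D.filter fun d => d.2 = y).card
/-- length of column x -/
def clen (D : Finset (ℕ × ℕ)) (x : ℕ) : ℕ := (D.filter fun d => d.1 = x).card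

lemma down_closed_mem_iff {S : Finset ℕ} (h : ∀ a ∈ S, ∀ b, b ≤ a → b ∈ S) (x : ℕ) :
    x ∈ S ↔ x < S.card := by
  constructor
  · intro hx
    by_contra hlt
    push_neg at hlt
    have hsub : Finset.range (x + 1) ⊆ S := by
      intro b hb
      exact h x hx b (by simpa [Nat.lt_succ_iff] using Finset.mem_range.1 hb)
    have := Finset.card_le_card hsub
    simp at this; omega
  · intro hx
    by_contra hxS
    have hsub : S ⊆ Finset.range x := by
      intro a ha
      rw [Finset.mem_range]
      by_contra hax
      push_neg at hax
      exact hxS (h a ha x hax)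
    have := Finset.card_le_card hsub
    simp at this; omega

lemma mem_iff_rlen {D : Finset (ℕ × ℕ)} (hD : IsYoung D) (x y : ℕ) :
    (x, y) ∈ D ↔ x < rlen D y := by
  have himg : rlen D y = ((D.filter fun d => d.2 = y).image Prod.fst).card := by
    rw [Finset.card_image_of_injOn]
    · rfl
    · intro d hd d' hd' hfst
      simp only [Finset.mem_coe, Finset.mem_filter] at hd hd'
      exact Prod.ext hfst (hd.2.trans hd'.2.symm)
  have hmem : ∀ a, a ∈ ((D.filter fun d => d.2 = y).image Prod.fst) ↔ (a, y) ∈ D := by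
    intro a
    simp only [Finset.mem_image, Finset.mem_filter]
    constructor
    · rintro ⟨d, ⟨hdD, hdy⟩, rfl⟩
      rwa [← hdy]
    · intro h; exact ⟨(a, y), ⟨h, rfl⟩, rfl⟩
  rw [himg, ← hmem x]
  exact down_closed_mem_iff (fun a ha b hb => (hmem b).2 (hD a y b y ((hmem a).1 ha) hb le_rfl)) x

lemma mem_iff_clen {D : Finset (ℕ × ℕ)} (hD : IsYoung D) (x y : ℕ) :
    (x, y) ∈ D ↔ y < clen D x := by
  have himg : clen D x = ((D.filter fun d => d.1 = x).image Prod.snd).card := by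
    rw [Finset.card_image_of_injOn]
    · rfl
    · intro d hd d' hd' hsnd
      simp only [Finset.mem_coe, Finset.mem_filter] at hd hd'
      exact Prod.ext (hd.2.trans hd'.2.symm) hsnd
  have hmem : ∀ a, a ∈ ((D.filter fun d => d.1 = x).image Prod.snd) ↔ (x, a) ∈ D := by
    intro a
    simp only [Finset.mem_image, Finset.mem_filter]
    constructor
    · rintro ⟨d, ⟨hdD, hdy⟩, rfl⟩
      rwa [← hdy]
    · intro h; exact ⟨(x, a), ⟨h, rfl⟩, rfl⟩
  rw [himg, ← hmem y]
  exact down_closed_mem_iff (fun a ha b hb => (hmem b).2 (hD x a x b ((hmem a).1 ha) le_rfl hb)) y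

lemma clen_anti {D : Finset (ℕ × ℕ)} (hD : IsYoung D) {x x' : ℕ} (h : x ≤ x') :
    clen D x' ≤ clen D x := by
  by_contra hc
  push_neg at hc
  have h1 : (x', clen D x) ∈ D := (mem_iff_clen hD _ _).2 hc
  have h2 : (x, clen D x) ∈ D := hD _ _ _ _ h1 h le_rfl
  have := (mem_iff_clen hD _ _).1 h2
  omega

lemma rlen_anti {D : Finset (ℕ × ℕ)} (hD : IsYoung D) {y y' : ℕ} (h : y ≤ y') :
    rlen D y' ≤ rlen D y := by
  by_contra hc
  push_neg at hc
  have h1 : (rlen D y, y') ∈ D := (mem_iff_rlen hD _ _).2 hc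
  have h2 : (rlen D y, y) ∈ D := hD _ _ _ _ h1 le_rfl h
  have := (mem_iff_rlen hD _ _).1 h2
  omega


lemma arm_eq {D : Finset (ℕ × ℕ)} (hD : IsYoung D) (x y : ℕ) :
    arm D (x, y) = rlen D y - (x + 1) := by
  have : D.filter (fun d => d.2 = (x,y).2 ∧ (x,y).1 < d.1)
      = (Finset.Ico (x+1) (rlen D y)).image (fun x' => (x', y)) := by
    ext d
    simp only [Finset.mem_filter, Finset.mem_image, Finset.mem_Ico]
    constructor
    · rintro ⟨hd, hdy, hlt⟩
      refine ⟨d.1, ⟨by omega, ?_⟩, by rw [← hdy]⟩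
      have : (d.1, y) ∈ D := by rw [← hdy]; exact hd
      exact (mem_iff_rlen hD _ _).1 this
    · rintro ⟨x', ⟨h1, h2⟩, rfl⟩
      exact ⟨(mem_iff_rlen hD _ _).2 h2, rfl, by omega⟩
  rw [arm, this, Finset.card_image_of_injective _ (fun a b h => by simpa using h)]
  simp

lemma leg_eq {D : Finset (ℕ × ℕ)} (hD : IsYoung D) (x y : ℕ) :
    leg D (x, y) = clen D x - (y + 1) := by
  have : D.filter (fun d => d.1 = (x,y).1 ∧ (x,y).2 < d.2)
      = (Finset.Ico (y+1) (clen D x)).image (fun y' => (x, y')) := by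
    ext d
    simp only [Finset.mem_filter, Finset.mem_image, Finset.mem_Ico]
    constructor
    · rintro ⟨hd, hdx, hlt⟩
      refine ⟨d.2, ⟨by omega, ?_⟩, by rw [← hdx]⟩
      have : (x, d.2) ∈ D := by rw [← hdx]; exact hd
      exact (mem_iff_clen hD _ _).1 this
    · rintro ⟨y', ⟨h1, h2⟩, rfl⟩
      exact ⟨(mem_iff_clen hD _ _).2 h2, rfl, by omega⟩
  rw [leg, this, Finset.card_image_of_injective _ (fun a b h => by simpa using h)]
  simp

lemma coArm_eq {D : Finset (ℕ × ℕ)} (hD : IsYoung D) (x y : ℕ) :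
    coArm D (x, y) = x - rlen D y := by
  have : (Finset.range x).filter (fun x' => (x', (x,y).2) ∉ D)
      = (Finset.range x).filter (fun x' => rlen D y ≤ x') := by
    apply Finset.filter_congr
    intro x' _
    simp only [mem_iff_rlen hD x' y]
    constructor
    · intro h; simpa using h
    · intro h; simpa using h
  have h2 : (Finset.range x).filter (fun x' => rlen D y ≤ x') = Finset.Ico (rlen D y) x := by
    ext x'
    simp only [Finset.mem_filter, Finset.mem_range, Finset.mem_Ico]
    omega
  rw [coArm, this, h2, Nat.card_Ico]

lemma coLeg_eq {D : Finset (ℕ × ℕ)} (hD : IsYoung D) (x y : ℕ) :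
    coLeg D (x, y) = y - clen D x := by
  have : (Finset.range y).filter (fun y' => ((x,y).1, y') ∉ D)
      = (Finset.range y).filter (fun y' => clen D x ≤ y') := by
    apply Finset.filter_congr
    intro y' _
    simp only [mem_iff_clen hD x y']
    constructor
    · intro h; simpa using h
    · intro h; simpa using h
  have h2 : (Finset.range y).filter (fun y' => clen D x ≤ y') = Finset.Ico (clen D x) y := by
    ext y'
    simp only [Finset.mem_filter, Finset.mem_range, Finset.mem_Ico]
    omega
  rw [coLeg, this, h2, Nat.card_Ico]


section Path

variable (D : Finset (ℕ × ℕ)) (p q K : ℕ)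

/-- time of the east step at column x (1-based) -/
def tE (Q x : ℕ) : ℕ := x + (Q - clen D x) + 1
/-- time of the south step at row y (1-based) -/
def tS (Q y : ℕ) : ℕ := rlen D y + (Q - y)

def Ef (x : ℕ) : ℤ := q * x + p * clen D x
def Sf (y : ℕ) : ℤ := q * rlen D y + p * y

end Path

/-- number of east steps up to time t -/
def NE (D : Finset (ℕ × ℕ)) (p q K t : ℕ) : ℕ :=
  ((Finset.range (K*p)).filter (fun x => tE D (K*q) x ≤ t)).card
/-- number of south steps up to time t -/
def NS (D : Finset (ℕ × ℕ)) (p q K t : ℕ) : ℕ :=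
  ((Finset.range (K*q)).filter (fun y => tS D (K*q) y ≤ t)).card

/-- the level of the path at time t -/
def g (D : Finset (ℕ × ℕ)) (p q K t : ℕ) : ℤ :=
  (K*p*q : ℕ) + q * (NE D p q K t) - p * (NS D p q K t)

section Path2
variable {D : Finset (ℕ × ℕ)} {p q K : ℕ}

lemma tE_strictMono (hD : IsYoung D) (Q : ℕ) : StrictMono (tE D Q) := by
  have h : ∀ x, tE D Q x < tE D Q (x+1) := by
    intro x
    have := clen_anti hD (show x ≤ x + 1 by omega)
    unfold tE
    omega
  exact strictMono_nat_of_lt_succ h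

lemma key (hD : IsYoung D) {Q x y : ℕ} (hyQ : y < Q) (hcx : clen D x ≤ Q) :
    (tS D Q y < tE D Q x ↔ clen D x ≤ y) ∧ (tE D Q x < tS D Q y ↔ y < clen D x)
      ∧ tE D Q x ≠ tS D Q y := by
  have h1 := mem_iff_rlen hD x y
  have h2 := mem_iff_clen hD x y
  have h3 : x < rlen D y ↔ y < clen D x := by rw [← h1, ← h2]
  unfold tE tS
  omega

lemma tS_lt_iff (hD : IsYoung D) {Q x y : ℕ} (hyQ : y < Q) (hcx : clen D x ≤ Q) :
    tS D Q y < tE D Q x ↔ clen D x ≤ y := (key hD hyQ hcx).1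

lemma tE_lt_iff (hD : IsYoung D) {Q x y : ℕ} (hyQ : y < Q) (hcx : clen D x ≤ Q) :
    tE D Q x < tS D Q y ↔ y < clen D x := (key hD hyQ hcx).2.1

lemma tE_ne_tS (hD : IsYoung D) {Q x y : ℕ} (hyQ : y < Q) (hcx : clen D x ≤ Q) :
    tE D Q x ≠ tS D Q y := (key hD hyQ hcx).2.2

lemma tS_strictAntiOn (hD : IsYoung D) (Q : ℕ) {y y' : ℕ} (h : y < y') (h' : y' < Q) :
    tS D Q y' < tS D Q y := by
  have := rlen_anti hD (le_of_lt h)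
  unfold tS
  omega

-- count lemmas
lemma NE_tE (hD : IsYoung D) {x : ℕ} (hx : x < K*p) :
    NE D p q K (tE D (K*q) x) = x + 1 ∧ NE D p q K (tE D (K*q) x - 1) = x := by
  have hmono := tE_strictMono hD (Q := K*q)
  constructor
  · have : (range (K*p)).filter (fun x' => tE D (K*q) x' ≤ tE D (K*q) x) = range (x+1) := by
      ext x'
      simp only [mem_filter, mem_range, hmono.le_iff_le]
      omega
    rw [NE, this, card_range]
  · have : (range (K*p)).filter (fun x' => tE D (K*q) x' ≤ tE D (K*q) x - 1) = range x := by
      ext x'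
      have h1 : tE D (K*q) x' ≤ tE D (K*q) x - 1 ↔ tE D (K*q) x' < tE D (K*q) x := by
        unfold tE; omega
      simp only [mem_filter, mem_range, h1, hmono.lt_iff_lt]
      omega
    rw [NE, this, card_range]

lemma NS_tE (hD : IsYoung D) (hcQ : ∀ x, clen D x ≤ K*q) (x : ℕ) :
    NS D p q K (tE D (K*q) x) = K*q - clen D x
      ∧ NS D p q K (tE D (K*q) x - 1) = K*q - clen D x := by
  have hfil : ∀ t, (tE D (K*q) x - 1 ≤ t) → (t ≤ tE D (K*q) x) →
      (range (K*q)).filter (fun y => tS D (K*q) y ≤ t) = Ico (clen D x) (K*q) := by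
    intro t ht1 ht2
    ext y
    simp only [mem_filter, mem_range, mem_Ico]
    constructor
    · rintro ⟨hy, hle⟩
      have : tS D (K*q) y < tE D (K*q) x := by
        rcases lt_or_eq_of_le (le_trans hle ht2) with h | h
        · exact h
        · exact absurd h.symm (tE_ne_tS hD hy (hcQ x))
      exact ⟨(tS_lt_iff hD hy (hcQ x)).1 this, hy⟩
    · rintro ⟨h1, h2⟩
      have : tS D (K*q) y < tE D (K*q) x := (tS_lt_iff hD h2 (hcQ x)).2 h1
      exact ⟨h2, by omega⟩
  constructor
  · rw [NS, hfil _ (by omega) le_rfl, Nat.card_Ico]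
  · rw [NS, hfil _ le_rfl (by omega), Nat.card_Ico]

lemma NE_tS (hD : IsYoung D) (hcQ : ∀ x, clen D x ≤ K*q) (hrP : ∀ y, rlen D y ≤ K*p)
    {y : ℕ} (hy : y < K*q) :
    NE D p q K (tS D (K*q) y) = rlen D y ∧ NE D p q K (tS D (K*q) y - 1) = rlen D y := by
  have hfil : ∀ t, (tS D (K*q) y - 1 ≤ t) → (t ≤ tS D (K*q) y) →
      (range (K*p)).filter (fun x => tE D (K*q) x ≤ t) = range (rlen D y) := by
    intro t ht1 ht2
    ext x
    have hiff : tE D (K*q) x < tS D (K*q) y ↔ x < rlen D y := by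
      rw [tE_lt_iff hD hy (hcQ x), ← mem_iff_clen hD, mem_iff_rlen hD]
    simp only [mem_filter, mem_range]
    constructor
    · rintro ⟨hx, hle⟩
      have : tE D (K*q) x < tS D (K*q) y := by
        rcases lt_or_eq_of_le (le_trans hle ht2) with h | h
        · exact h
        · exact absurd h (tE_ne_tS hD hy (hcQ x))
      exact hiff.1 this
    · intro h1
      have := hiff.2 h1
      exact ⟨lt_of_lt_of_le h1 (hrP y), by omega⟩
  constructor
  · rw [NE, hfil _ (by omega) le_rfl, card_range]
  · rw [NE, hfil _ le_rfl (by omega), card_range]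

lemma NS_tS (hD : IsYoung D) {y : ℕ} (hy : y < K*q) :
    NS D p q K (tS D (K*q) y) = K*q - y ∧ NS D p q K (tS D (K*q) y - 1) = K*q - y - 1 := by
  constructor
  · have : (range (K*q)).filter (fun y' => tS D (K*q) y' ≤ tS D (K*q) y) = Ico y (K*q) := by
      ext y'
      simp only [mem_filter, mem_range, mem_Ico]
      constructor
      · rintro ⟨h1, h2⟩
        refine ⟨?_, h1⟩
        by_contra hlt
        push_neg at hlt
        have := tS_strictAntiOn hD (K*q) hlt hy
        omega
      · rintro ⟨h1, h2⟩
        refine ⟨h2, ?_⟩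
        rcases eq_or_lt_of_le h1 with rfl | h
        · exact le_rfl
        · exact le_of_lt (tS_strictAntiOn hD (K*q) h h2)
    rw [NS, this, Nat.card_Ico]
  · have : (range (K*q)).filter (fun y' => tS D (K*q) y' ≤ tS D (K*q) y - 1) = Ioo y (K*q) := by
      ext y'
      have h0 : 1 ≤ tS D (K*q) y := by unfold tS; omega
      simp only [mem_filter, mem_range, mem_Ioo]
      constructor
      · rintro ⟨h1, h2⟩
        refine ⟨?_, h1⟩
        by_contra hlt
        push_neg at hlt
        rcases eq_or_lt_of_le hlt with rfl | h
        · omega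
        · have := tS_strictAntiOn hD (K*q) h hy
          omega
      · rintro ⟨h1, h2⟩
        have := tS_strictAntiOn hD (K*q) h1 h2
        exact ⟨h2, by omega⟩
    rw [NS, this, Nat.card_Ioo]

lemma g_tE (hD : IsYoung D) (hcQ : ∀ x, clen D x ≤ K*q) {x : ℕ} (hx : x < K*p) :
    g D p q K (tE D (K*q) x) = Ef D p q x + q
      ∧ g D p q K (tE D (K*q) x - 1) = Ef D p q x := by
  have hc := hcQ x
  constructor
  · rw [g, (NE_tE hD hx).1, (NS_tE hD hcQ x).1, Ef]
    push_cast [Nat.cast_sub hc]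
    ring
  · rw [g, (NE_tE hD hx).2, (NS_tE hD hcQ x).2, Ef]
    push_cast [Nat.cast_sub hc]
    ring

lemma g_tS (hD : IsYoung D) (hcQ : ∀ x, clen D x ≤ K*q) (hrP : ∀ y, rlen D y ≤ K*p)
    {y : ℕ} (hy : y < K*q) :
    g D p q K (tS D (K*q) y) = Sf D p q y
      ∧ g D p q K (tS D (K*q) y - 1) = Sf D p q y + p := by
  have h1 : y ≤ K*q := le_of_lt hy
  have h2 : (1:ℕ) ≤ K*q - y := by omega
  constructor
  · rw [g, (NE_tS hD hcQ hrP hy).1, (NS_tS hD hy).1, Sf]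
    push_cast [Nat.cast_sub h1]
    ring
  · rw [g, (NE_tS hD hcQ hrP hy).2, (NS_tS hD hy).2, Sf]
    push_cast [Nat.cast_sub h2, Nat.cast_sub h1]
    ring

lemma g_zero : g D p q K 0 = K*p*q := by
  have hE : NE D p q K 0 = 0 := by
    rw [NE, Finset.card_eq_zero, Finset.filter_eq_empty_iff]
    intro x _
    unfold tE
    omega
  have hS : NS D p q K 0 = 0 := by
    rw [NS, Finset.card_eq_zero, Finset.filter_eq_empty_iff]
    intro y hy
    rw [Finset.mem_range] at hy
    unfold tS
    omega
  rw [g, hE, hS]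
  push_cast
  ring

lemma g_end (hrP : ∀ y, rlen D y ≤ K*p) : g D p q K (K*p + K*q) = K*p*q := by
  have hE : NE D p q K (K*p + K*q) = K*p := by
    rw [NE]
    have : (range (K*p)).filter (fun x => tE D (K*q) x ≤ K*p + K*q) = range (K*p) := by
      rw [Finset.filter_eq_self]
      intro x hx
      rw [Finset.mem_range] at hx
      unfold tE
      have : K*q - clen D x ≤ K*q := by omega
      omega
    rw [this, card_range]
  have hS : NS D p q K (K*p + K*q) = K*q := by
    rw [NS]
    have : (range (K*q)).filter (fun y => tS D (K*q) y ≤ K*p + K*q) = range (K*q) := by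
      rw [Finset.filter_eq_self]
      intro y hy
      rw [Finset.mem_range] at hy
      have := hrP y
      unfold tS
      omega
    rw [this, card_range]
  rw [g, hE, hS]
  push_cast
  ring

lemma tele (f : ℕ → ℤ) {M N : ℕ} (h : M ≤ N) :
    ∑ t ∈ Finset.Ico M N, (f (t+1) - f t) = f N - f M := by
  induction N, h using Nat.le_induction with
  | base => simp
  | succ n hn ih =>
      rw [Finset.sum_Ico_succ_top (by omega), ih]
      ring

lemma tel (hD : IsYoung D) (hcQ : ∀ x, clen D x ≤ K*q) (hrP : ∀ y, rlen D y ≤ K*p)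
    (L : ℤ) {M N : ℕ} (hMN : M ≤ N)
    (X Y : Finset ℕ) (hX : X ⊆ range (K*p)) (hY : Y ⊆ range (K*q))
    (hcover : Finset.Icc (M+1) N = X.image (tE D (K*q)) ∪ Y.image (tS D (K*q))) :
    (if g D p q K N ≤ L then (1:ℤ) else 0) - (if g D p q K M ≤ L then 1 else 0)
      = (∑ x ∈ X, ((if Ef D p q x + q ≤ L then (1:ℤ) else 0)
            - (if Ef D p q x ≤ L then 1 else 0)))
        + (∑ y ∈ Y, ((if Sf D p q y ≤ L then (1:ℤ) else 0)
            - (if Sf D p q y + p ≤ L then 1 else 0))) := by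
  set f : ℕ → ℤ := fun t => if g D p q K t ≤ L then (1:ℤ) else 0 with hf
  have step1 : f N - f M = ∑ t ∈ Finset.Ico M N, (f (t+1) - f t) := (tele f hMN).symm
  have himg : Finset.Icc (M+1) N = (Finset.Ico M N).image (· + 1) := by
    ext s
    simp only [Finset.mem_Icc, Finset.mem_image, Finset.mem_Ico]
    constructor
    · intro h; exact ⟨s - 1, by omega, by omega⟩
    · rintro ⟨t, ht, rfl⟩; omega
  have step2 : ∑ t ∈ Finset.Ico M N, (f (t+1) - f t)
      = ∑ s ∈ Finset.Icc (M+1) N, (f s - f (s-1)) := by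
    rw [himg, Finset.sum_image (by intro a _ b _ h; simp only at h; omega)]
    apply Finset.sum_congr rfl
    intro t _
    simp
  have hdisj : Disjoint (X.image (tE D (K*q))) (Y.image (tS D (K*q))) := by
    rw [Finset.disjoint_left]
    rintro s hsE hsS
    obtain ⟨x, hx, rfl⟩ := Finset.mem_image.1 hsE
    obtain ⟨y, hy, heq⟩ := Finset.mem_image.1 hsS
    have hyQ : y < K*q := Finset.mem_range.1 (hY hy)
    exact tE_ne_tS hD hyQ (hcQ x) heq.symm
  have hEinj : Set.InjOn (tE D (K*q)) X := fun a _ b _ h => (tE_strictMono hD (K*q)).injective h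
  have hSinj : Set.InjOn (tS D (K*q)) Y := by
    intro a ha b hb h
    by_contra hne
    rcases Nat.lt_or_ge a b with hab | hab
    · have := tS_strictAntiOn hD (K*q) hab (Finset.mem_range.1 (hY hb)); omega
    · have hab' : b < a := by omega
      have := tS_strictAntiOn hD (K*q) hab' (Finset.mem_range.1 (hY ha)); omega
  calc (if g D p q K N ≤ L then (1:ℤ) else 0) - (if g D p q K M ≤ L then 1 else 0)
      = ∑ s ∈ Finset.Icc (M+1) N, (f s - f (s-1)) := step1.trans step2
    _ = ∑ s ∈ (X.image (tE D (K*q)) ∪ Y.image (tS D (K*q))), (f s - f (s-1)) := by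
        rw [← hcover]
    _ = ∑ x ∈ X, (f (tE D (K*q) x) - f (tE D (K*q) x - 1))
          + ∑ y ∈ Y, (f (tS D (K*q) y) - f (tS D (K*q) y - 1)) := by
        rw [Finset.sum_union hdisj, Finset.sum_image hEinj, Finset.sum_image hSinj]
    _ = _ := by
        congr 1
        · apply Finset.sum_congr rfl
          intro x hx'
          have hxP : x < K*p := Finset.mem_range.1 (hX hx')
          simp only [hf]
          rw [(g_tE hD hcQ hxP).1, (g_tE hD hcQ hxP).2]
        · apply Finset.sum_congr rfl
          intro y hy'
          have hyQ : y < K*q := Finset.mem_range.1 (hY hy')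
          simp only [hf]
          rw [(g_tS hD hcQ hrP hyQ).1, (g_tS hD hcQ hrP hyQ).2]

lemma rlen_le (hD : IsYoung D) (hq : 0 < q)
    (hdiag : ∀ c ∈ D, q * c.1 + p * c.2 + p + q ≤ K * p * q) (y : ℕ) :
    rlen D y ≤ K * p := by
  by_contra h
  push_neg at h
  have hmem : (K*p, y) ∈ D := (mem_iff_rlen hD _ _).2 h
  have h2 := hdiag _ hmem
  simp only at h2
  have h3 : q*(K*p) = K*p*q := by ring
  omega

lemma clen_le (hD : IsYoung D) (hp : 0 < p)
    (hdiag : ∀ c ∈ D, q * c.1 + p * c.2 + p + q ≤ K * p * q) (x : ℕ) :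
    clen D x ≤ K * q := by
  by_contra h
  push_neg at h
  have hmem : (x, K*q) ∈ D := (mem_iff_clen hD _ _).2 h
  have h2 := hdiag _ hmem
  simp only at h2
  have h3 : p*(K*q) = K*p*q := by ring
  omega

section Corner

variable {a b : ℕ}

lemma corner_rlen (hD : IsYoung D) (hab : (a,b) ∈ D) (hra : (a+1,b) ∉ D) :
    rlen D b = a + 1 := by
  have h1 := (mem_iff_rlen hD a b).1 hab
  have h2 : ¬ (a+1 < rlen D b) := fun h => hra ((mem_iff_rlen hD _ _).2 h)
  omega

lemma corner_clen (hD : IsYoung D) (hab : (a,b) ∈ D) (hcb : (a,b+1) ∉ D) :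
    clen D a = b + 1 := by
  have h1 := (mem_iff_clen hD a b).1 hab
  have h2 : ¬ (b+1 < clen D a) := fun h => hcb ((mem_iff_clen hD _ _).2 h)
  omega

lemma cover_full (hD : IsYoung D) (hcQ : ∀ x, clen D x ≤ K*q) (hrP : ∀ y, rlen D y ≤ K*p) :
    Finset.Icc 1 (K*p + K*q)
      = (range (K*p)).image (tE D (K*q)) ∪ (range (K*q)).image (tS D (K*q)) := by
  have hsub : (range (K*p)).image (tE D (K*q)) ∪ (range (K*q)).image (tS D (K*q))
      ⊆ Finset.Icc 1 (K*p + K*q) := by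
    intro s hs
    rw [Finset.mem_union] at hs
    rw [Finset.mem_Icc]
    rcases hs with hs | hs
    · obtain ⟨x, hx, rfl⟩ := Finset.mem_image.1 hs
      rw [Finset.mem_range] at hx
      have : K*q - clen D x ≤ K*q := by omega
      unfold tE
      omega
    · obtain ⟨y, hy, rfl⟩ := Finset.mem_image.1 hs
      rw [Finset.mem_range] at hy
      have := hrP y
      unfold tS
      omega
  have hdisj : Disjoint ((range (K*p)).image (tE D (K*q))) ((range (K*q)).image (tS D (K*q))) := by
    rw [Finset.disjoint_left]
    rintro s hsE hsS
    obtain ⟨x, hx, rfl⟩ := Finset.mem_image.1 hsE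
    obtain ⟨y, hy, heq⟩ := Finset.mem_image.1 hsS
    exact tE_ne_tS hD (Finset.mem_range.1 hy) (hcQ x) heq.symm
  have hcard : ((range (K*p)).image (tE D (K*q)) ∪ (range (K*q)).image (tS D (K*q))).card
      = K*p + K*q := by
    rw [Finset.card_union_of_disjoint hdisj,
      Finset.card_image_of_injOn (fun a _ b _ h => (tE_strictMono hD (K*q)).injective h),
      Finset.card_image_of_injOn ?_, card_range, card_range]
    intro u hu v hv h
    by_contra hne
    rcases Nat.lt_or_ge u v with huv | huv
    · have := tS_strictAntiOn hD (K*q) huv (Finset.mem_range.1 hv); omega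
    · have huv' : v < u := by omega
      have := tS_strictAntiOn hD (K*q) huv' (Finset.mem_range.1 hu); omega
  refine (Finset.eq_of_subset_of_card_le hsub ?_).symm
  rw [hcard, Nat.card_Icc]
  omega

end Corner

section Corner2

variable {a b : ℕ}

lemma eqI (hD : IsYoung D) (hp : 0 < p) (hq : 0 < q)
    (hdiag : ∀ c ∈ D, q * c.1 + p * c.2 + p + q ≤ K * p * q)
    (hab : (a,b) ∈ D) (hra : (a+1,b) ∉ D) (hcb : (a,b+1) ∉ D) :
    (∑ x ∈ range a, ((if Ef D p q x + q ≤ ((q*a+p*b : ℕ) : ℤ) then (1:ℤ) else 0)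
        - (if Ef D p q x ≤ ((q*a+p*b : ℕ) : ℤ) then 1 else 0)))
    + (∑ y ∈ Finset.Ioo b (K*q), ((if Sf D p q y ≤ ((q*a+p*b : ℕ) : ℤ) then (1:ℤ) else 0)
        - (if Sf D p q y + p ≤ ((q*a+p*b : ℕ) : ℤ) then 1 else 0))) = 0 := by
  have hrP := rlen_le hD hq hdiag
  have hcQ := clen_le hD hp hdiag
  have rb := corner_rlen hD hab hra
  have ca := corner_clen hD hab hcb
  have haP : a < K*p := by have := hrP b; omega
  have hbQ : b < K*q := by have := hcQ a; omega
  have hT := hdiag _ hab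
  simp only at hT
  have tSb : tS D (K*q) b = tE D (K*q) a + 1 := by
    unfold tS tE; rw [rb, ca]; omega
  have hcover : Finset.Icc 1 (tE D (K*q) a - 1)
      = (range a).image (tE D (K*q)) ∪ (Finset.Ioo b (K*q)).image (tS D (K*q)) := by
    ext s
    constructor
    · intro hs
      rw [Finset.mem_Icc] at hs
      have hs' : s ∈ Finset.Icc 1 (K*p + K*q) := by
        rw [Finset.mem_Icc]
        have h1 : K*q - clen D a ≤ K*q := by omega
        have h2 : tE D (K*q) a ≤ K*p + K*q := by unfold tE; omega
        omega
      rw [cover_full hD hcQ hrP, Finset.mem_union] at hs'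
      rw [Finset.mem_union]
      rcases hs' with h | h
      · left
        obtain ⟨x, hx, rfl⟩ := Finset.mem_image.1 h
        refine Finset.mem_image.2 ⟨x, ?_, rfl⟩
        rw [Finset.mem_range]
        have hlt : tE D (K*q) x < tE D (K*q) a := by omega
        exact (tE_strictMono hD (K*q)).lt_iff_lt.1 hlt
      · right
        obtain ⟨y, hy, rfl⟩ := Finset.mem_image.1 h
        rw [Finset.mem_range] at hy
        refine Finset.mem_image.2 ⟨y, Finset.mem_Ioo.2 ⟨?_, hy⟩, rfl⟩
        by_contra hyb
        push_neg at hyb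
        have hle : tS D (K*q) b ≤ tS D (K*q) y := by
          rcases eq_or_lt_of_le hyb with rfl | hlt
          · exact le_rfl
          · exact le_of_lt (tS_strictAntiOn hD (K*q) hlt hbQ)
        omega
    · intro hs
      rw [Finset.mem_union] at hs
      rw [Finset.mem_Icc]
      rcases hs with h | h
      · obtain ⟨x, hx, rfl⟩ := Finset.mem_image.1 h
        rw [Finset.mem_range] at hx
        have h1 : tE D (K*q) x < tE D (K*q) a := (tE_strictMono hD (K*q)) hx
        have h2 : (1:ℕ) ≤ tE D (K*q) x := by unfold tE; omega
        omega
      · obtain ⟨y, hy, rfl⟩ := Finset.mem_image.1 h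
        rw [Finset.mem_Ioo] at hy
        have h1 : tS D (K*q) y < tS D (K*q) b := tS_strictAntiOn hD (K*q) hy.1 hy.2
        have h2 : tE D (K*q) a ≠ tS D (K*q) y := tE_ne_tS hD hy.2 (hcQ a)
        have h3 : (1:ℕ) ≤ tS D (K*q) y := by unfold tS; omega
        omega
  have htel := tel hD hcQ hrP ((q*a+p*b : ℕ) : ℤ) (Nat.zero_le (tE D (K*q) a - 1))
      (range a) (Finset.Ioo b (K*q))
      (by intro t ht; rw [Finset.mem_range] at *; omega)
      (by intro t ht; rw [Finset.mem_Ioo] at ht; rw [Finset.mem_range]; exact ht.2)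
      (by rw [Nat.zero_add]; exact hcover)
  rw [(g_tE hD hcQ haP).2, g_zero] at htel
  have hEfa : Ef D p q a = ((q*a+p*b : ℕ) : ℤ) + p := by
    rw [Ef, ca]; push_cast; ring
  rw [hEfa] at htel
  have hTz : (q:ℤ)*a + p*b + p + q ≤ (K:ℤ)*p*q := by exact_mod_cast hT
  rw [if_neg (by push_cast; omega),
    if_neg (by push_cast; omega)] at htel
  simp only [sub_zero] at htel
  linarith [htel]

lemma eqII (hD : IsYoung D) (hp : 0 < p) (hq : 0 < q)
    (hdiag : ∀ c ∈ D, q * c.1 + p * c.2 + p + q ≤ K * p * q)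
    (hab : (a,b) ∈ D) (hra : (a+1,b) ∉ D) (hcb : (a,b+1) ∉ D) :
    (∑ x ∈ Finset.Ioo a (K*p), ((if Ef D p q x + q ≤ ((q*a+p*b+p+q : ℕ) : ℤ) - 1 then (1:ℤ) else 0)
        - (if Ef D p q x ≤ ((q*a+p*b+p+q : ℕ) : ℤ) - 1 then 1 else 0)))
    + (∑ y ∈ range b, ((if Sf D p q y ≤ ((q*a+p*b+p+q : ℕ) : ℤ) - 1 then (1:ℤ) else 0)
        - (if Sf D p q y + p ≤ ((q*a+p*b+p+q : ℕ) : ℤ) - 1 then 1 else 0))) = -1 := by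
  have hrP := rlen_le hD hq hdiag
  have hcQ := clen_le hD hp hdiag
  have rb := corner_rlen hD hab hra
  have ca := corner_clen hD hab hcb
  have haP : a < K*p := by have := hrP b; omega
  have hbQ : b < K*q := by have := hcQ a; omega
  have hT := hdiag _ hab
  simp only at hT
  have tSb : tS D (K*q) b = tE D (K*q) a + 1 := by
    unfold tS tE; rw [rb, ca]; omega
  have htSb_le : tS D (K*q) b ≤ K*p + K*q := by
    unfold tS; rw [rb]; omega
  have hcover : Finset.Icc (tS D (K*q) b + 1) (K*p + K*q)
      = (Finset.Ioo a (K*p)).image (tE D (K*q)) ∪ (range b).image (tS D (K*q)) := by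
    ext s
    constructor
    · intro hs
      rw [Finset.mem_Icc] at hs
      have hs' : s ∈ Finset.Icc 1 (K*p + K*q) := by
        rw [Finset.mem_Icc]; omega
      rw [cover_full hD hcQ hrP, Finset.mem_union] at hs'
      rw [Finset.mem_union]
      rcases hs' with h | h
      · left
        obtain ⟨x, hx, rfl⟩ := Finset.mem_image.1 h
        refine Finset.mem_image.2 ⟨x, ?_, rfl⟩
        rw [Finset.mem_Ioo]
        refine ⟨?_, Finset.mem_range.1 hx⟩
        have hlt : tE D (K*q) a < tE D (K*q) x := by omega
        exact (tE_strictMono hD (K*q)).lt_iff_lt.1 hlt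
      · right
        obtain ⟨y, hy, rfl⟩ := Finset.mem_image.1 h
        rw [Finset.mem_range] at hy
        refine Finset.mem_image.2 ⟨y, Finset.mem_range.2 ?_, rfl⟩
        by_contra hyb
        push_neg at hyb
        have hle : tS D (K*q) y ≤ tS D (K*q) b := by
          rcases eq_or_lt_of_le hyb with rfl | hlt
          · exact le_rfl
          · exact le_of_lt (tS_strictAntiOn hD (K*q) hlt hy)
        omega
    · intro hs
      rw [Finset.mem_union] at hs
      rw [Finset.mem_Icc]
      rcases hs with h | h
      · obtain ⟨x, hx, rfl⟩ := Finset.mem_image.1 h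
        rw [Finset.mem_Ioo] at hx
        have h1 : tE D (K*q) a < tE D (K*q) x := (tE_strictMono hD (K*q)) hx.1
        have h2 : tE D (K*q) x ≠ tS D (K*q) b := tE_ne_tS hD hbQ (hcQ x)
        have h3 : tE D (K*q) x ≤ K*p + K*q := by
          have h4 : K*q - clen D x ≤ K*q := by omega
          have := hx.2
          unfold tE
          omega
        omega
      · obtain ⟨y, hy, rfl⟩ := Finset.mem_image.1 h
        rw [Finset.mem_range] at hy
        have hyQ : y < K*q := by omega
        have h1 : tS D (K*q) b < tS D (K*q) y := tS_strictAntiOn hD (K*q) hy hbQ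
        have h3 : tS D (K*q) y ≤ K*p + K*q := by
          have := hrP y
          unfold tS
          omega
        omega
  have htel := tel hD hcQ hrP (((q*a+p*b+p+q : ℕ) : ℤ) - 1) htSb_le
      (Finset.Ioo a (K*p)) (range b)
      (by intro t ht; rw [Finset.mem_Ioo] at ht; rw [Finset.mem_range]; exact ht.2)
      (by intro t ht; rw [Finset.mem_range] at *; omega)
      hcover
  rw [g_end hrP, (g_tS hD hcQ hrP hbQ).1] at htel
  have hSfb : Sf D p q b = ((q*a+p*b : ℕ) : ℤ) + q := by
    rw [Sf, rb]; push_cast; ring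
  rw [hSfb] at htel
  have hTz : (q:ℤ)*a + p*b + p + q ≤ (K:ℤ)*p*q := by exact_mod_cast hT
  rw [if_neg (by push_cast; omega),
    if_pos (by push_cast; omega)] at htel
  simp only [zero_sub] at htel
  linarith [htel]

end Corner2

end Path2

/-- summand: C-indicator minus B-indicator minus E-indicator -/
def Fval (p q K x y cx ry : ℕ) : ℤ :=
  (if (¬ y < cx) ∧ (q*ry + p*y + p ≤ q*x + p*cx) then (1:ℤ) else 0)
  - (if (y < cx) ∧ (q*x + p*cx + q ≤ q*ry + p*y) then 1 else 0)
  - (if (¬ y < cx) ∧ (q*x + p*y + p + q ≤ K*p*q) then 1 else 0)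

section Core
variable {D : Finset (ℕ × ℕ)} {p q K : ℕ}

lemma clen_empty (x : ℕ) : clen (∅ : Finset (ℕ × ℕ)) x = 0 := by simp [clen]
lemma rlen_empty (y : ℕ) : rlen (∅ : Finset (ℕ × ℕ)) y = 0 := by simp [rlen]

lemma clen_erase_self {a b : ℕ} (hab : (a,b) ∈ D) :
    clen (D.erase (a,b)) a = clen D a - 1 := by
  rw [clen, clen]
  have : (D.erase (a,b)).filter (fun d => d.1 = a) = (D.filter (fun d => d.1 = a)).erase (a,b) := by
    ext d
    simp only [Finset.mem_filter, Finset.mem_erase]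
    tauto
  rw [this, Finset.card_erase_of_mem (by simp [hab])]

lemma rlen_erase_self {a b : ℕ} (hab : (a,b) ∈ D) :
    rlen (D.erase (a,b)) b = rlen D b - 1 := by
  rw [rlen, rlen]
  have : (D.erase (a,b)).filter (fun d => d.2 = b) = (D.filter (fun d => d.2 = b)).erase (a,b) := by
    ext d
    simp only [Finset.mem_filter, Finset.mem_erase]
    tauto
  rw [this, Finset.card_erase_of_mem (by simp [hab])]

lemma clen_erase_ne {a b x : ℕ} (hx : x ≠ a) :
    clen (D.erase (a,b)) x = clen D x := by
  rw [clen, clen]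
  congr 1
  ext d
  simp only [Finset.mem_filter, Finset.mem_erase]
  constructor
  · tauto
  · rintro ⟨hd, hdx⟩
    refine ⟨⟨fun h => ?_, hd⟩, hdx⟩
    rw [h] at hdx
    exact hx (by simpa using hdx.symm)

lemma rlen_erase_ne {a b y : ℕ} (hy : y ≠ b) :
    rlen (D.erase (a,b)) y = rlen D y := by
  rw [rlen, rlen]
  congr 1
  ext d
  simp only [Finset.mem_filter, Finset.mem_erase]
  constructor
  · tauto
  · rintro ⟨hd, hdy⟩
    refine ⟨⟨fun h => ?_, hd⟩, hdy⟩
    rw [h] at hdy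
    exact hy (by simpa using hdy.symm)

lemma young_erase {a b : ℕ} (hD : IsYoung D) (hab : (a,b) ∈ D)
    (hra : (a+1,b) ∉ D) (hcb : (a,b+1) ∉ D) : IsYoung (D.erase (a,b)) := by
  intro x y x' y' hxy hx hy
  rw [Finset.mem_erase] at hxy ⊢
  obtain ⟨hne, hmem⟩ := hxy
  refine ⟨?_, hD x y x' y' hmem hx hy⟩
  intro heq
  rw [Prod.mk.injEq] at heq
  obtain ⟨rfl, rfl⟩ := heq
  rcases Nat.lt_or_ge x' x with h | h
  · exact hra (hD x y (x'+1) y' hmem (by omega) hy)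
  · have hxx : x = x' := by omega
    subst hxx
    have hyy : y' < y := by
      rcases Nat.lt_or_ge y' y with h2 | h2
      · exact h2
      · have : y = y' := by omega
        subst this
        exact absurd rfl hne
    exact hcb (hD x y x (y'+1) hmem le_rfl (by omega))

section CorCor
variable {D : Finset (ℕ × ℕ)} {p q K a b : ℕ}

lemma cor_eqI (hD : IsYoung D) (hp : 0 < p) (hq : 0 < q)
    (hdiag : ∀ c ∈ D, q * c.1 + p * c.2 + p + q ≤ K * p * q)
    (hab : (a,b) ∈ D) (hra : (a+1,b) ∉ D) (hcb : (a,b+1) ∉ D) :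
    (∑ x ∈ Finset.range a, ((if q*x + p*clen D x + q ≤ q*a + p*b then (1:ℤ) else 0)
        - (if q*x + p*clen D x ≤ q*a + p*b then 1 else 0)))
    + (∑ y ∈ Finset.Ioo b (K*q), ((if q*rlen D y + p*y ≤ q*a + p*b then (1:ℤ) else 0)
        - (if q*rlen D y + p*y + p ≤ q*a + p*b then 1 else 0))) = 0 := by
  have h := eqI hD hp hq hdiag hab hra hcb
  have ex : ∀ x : ℕ, ((if q*x + p*clen D x + q ≤ q*a + p*b then (1:ℤ) else 0)
      - (if q*x + p*clen D x ≤ q*a + p*b then 1 else 0))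
      = ((if Ef D p q x + q ≤ ((q*a+p*b:ℕ):ℤ) then (1:ℤ) else 0)
      - (if Ef D p q x ≤ ((q*a+p*b:ℕ):ℤ) then 1 else 0)) := by
    intro x
    rw [Ef]
    congr 1
    · exact if_congr (by push_cast; omega) rfl rfl
    · exact if_congr (by push_cast; omega) rfl rfl
  have ey : ∀ y : ℕ, ((if q*rlen D y + p*y ≤ q*a + p*b then (1:ℤ) else 0)
      - (if q*rlen D y + p*y + p ≤ q*a + p*b then 1 else 0))
      = ((if Sf D p q y ≤ ((q*a+p*b:ℕ):ℤ) then (1:ℤ) else 0)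
      - (if Sf D p q y + p ≤ ((q*a+p*b:ℕ):ℤ) then 1 else 0)) := by
    intro y
    rw [Sf]
    congr 1
    · exact if_congr (by push_cast; omega) rfl rfl
    · exact if_congr (by push_cast; omega) rfl rfl
  rw [Finset.sum_congr rfl (fun x _ => ex x), Finset.sum_congr rfl (fun y _ => ey y)]
  exact h

lemma cor_eqII (hD : IsYoung D) (hp : 0 < p) (hq : 0 < q)
    (hdiag : ∀ c ∈ D, q * c.1 + p * c.2 + p + q ≤ K * p * q)
    (hab : (a,b) ∈ D) (hra : (a+1,b) ∉ D) (hcb : (a,b+1) ∉ D) :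
    (∑ x ∈ Finset.Ioo a (K*p), ((if q*x + p*clen D x + q < q*a + p*b + p + q then (1:ℤ) else 0)
        - (if q*x + p*clen D x < q*a + p*b + p + q then 1 else 0)))
    + (∑ y ∈ Finset.range b, ((if q*rlen D y + p*y < q*a + p*b + p + q then (1:ℤ) else 0)
        - (if q*rlen D y + p*y + p < q*a + p*b + p + q then 1 else 0))) = -1 := by
  have h := eqII hD hp hq hdiag hab hra hcb
  have ex : ∀ x : ℕ, ((if q*x + p*clen D x + q < q*a + p*b + p + q then (1:ℤ) else 0)
      - (if q*x + p*clen D x < q*a + p*b + p + q then 1 else 0))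
      = ((if Ef D p q x + q ≤ ((q*a+p*b+p+q:ℕ):ℤ) - 1 then (1:ℤ) else 0)
      - (if Ef D p q x ≤ ((q*a+p*b+p+q:ℕ):ℤ) - 1 then 1 else 0)) := by
    intro x
    rw [Ef]
    congr 1
    · exact if_congr (by push_cast; omega) rfl rfl
    · exact if_congr (by push_cast; omega) rfl rfl
  have ey : ∀ y : ℕ, ((if q*rlen D y + p*y < q*a + p*b + p + q then (1:ℤ) else 0)
      - (if q*rlen D y + p*y + p < q*a + p*b + p + q then 1 else 0))
      = ((if Sf D p q y ≤ ((q*a+p*b+p+q:ℕ):ℤ) - 1 then (1:ℤ) else 0)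
      - (if Sf D p q y + p ≤ ((q*a+p*b+p+q:ℕ):ℤ) - 1 then 1 else 0)) := by
    intro y
    rw [Sf]
    congr 1
    · exact if_congr (by push_cast; omega) rfl rfl
    · exact if_congr (by push_cast; omega) rfl rfl
  rw [Finset.sum_congr rfl (fun x _ => ex x), Finset.sum_congr rfl (fun y _ => ey y)]
  exact h

end CorCor

set_option maxHeartbeats 3000000 in
lemma core (hp : 0 < p) (hq : 0 < q) (hK : 0 < K) (D : Finset (ℕ × ℕ)) :
    IsYoung D → (∀ c ∈ D, q * c.1 + p * c.2 + p + q ≤ K * p * q) →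
    ∑ z ∈ (Finset.range (K*p)) ×ˢ (Finset.range (K*q)),
      Fval p q K z.1 z.2 (clen D z.1) (rlen D z.2) = 0 := by
  induction D using Finset.strongInduction with
  | _ D ih =>
    intro hD hdiag
    rcases D.eq_empty_or_nonempty with rfl | hne
    · -- base case : empty diagram
      have hPpos : 0 < K*p := Nat.mul_pos hK hp
      have hstep : ∀ z : ℕ × ℕ, Fval p q K z.1 z.2 (clen (∅ : Finset (ℕ×ℕ)) z.1)
          (rlen (∅ : Finset (ℕ×ℕ)) z.2)
          = (if p*z.2 + p ≤ q*z.1 then (1:ℤ) else 0)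
            - (if q*z.1 + p*z.2 + p + q ≤ K*p*q then 1 else 0) := by
        intro z
        rw [clen_empty, rlen_empty, Fval]
        split_ifs <;> omega
      rw [Finset.sum_congr rfl (fun z _ => hstep z), Finset.sum_sub_distrib]
      have hbij : ∑ z ∈ (Finset.range (K*p)) ×ˢ (Finset.range (K*q)),
            (if p*z.2 + p ≤ q*z.1 then (1:ℤ) else 0)
          = ∑ z ∈ (Finset.range (K*p)) ×ˢ (Finset.range (K*q)),
            (if q*z.1 + p*z.2 + p + q ≤ K*p*q then (1:ℤ) else 0) := by
        apply Finset.sum_nbij' (i := fun z : ℕ × ℕ => (K*p - 1 - z.1, z.2))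
          (j := fun z : ℕ × ℕ => (K*p - 1 - z.1, z.2))
        · intro z hz
          rw [Finset.mem_product, Finset.mem_range, Finset.mem_range] at hz
          exact Finset.mem_product.2 ⟨Finset.mem_range.2 (show K*p - 1 - z.1 < K*p by omega),
            Finset.mem_range.2 (show z.2 < K*q from hz.2)⟩
        · intro z hz
          rw [Finset.mem_product, Finset.mem_range, Finset.mem_range] at hz
          exact Finset.mem_product.2 ⟨Finset.mem_range.2 (show K*p - 1 - z.1 < K*p by omega),
            Finset.mem_range.2 (show z.2 < K*q from hz.2)⟩
        · intro z hz
          rw [Finset.mem_product, Finset.mem_range, Finset.mem_range] at hz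
          show (K*p - 1 - (K*p - 1 - z.1, z.2).1, (K*p - 1 - z.1, z.2).2) = z
          have h1 : K*p - 1 - (K*p - 1 - z.1) = z.1 := by omega
          show (K*p - 1 - (K*p - 1 - z.1), z.2) = z
          rw [h1]
        · intro z hz
          rw [Finset.mem_product, Finset.mem_range, Finset.mem_range] at hz
          have h1 : K*p - 1 - (K*p - 1 - z.1) = z.1 := by omega
          show (K*p - 1 - (K*p - 1 - z.1), z.2) = z
          rw [h1]
        · intro z hz
          rw [Finset.mem_product, Finset.mem_range] at hz
          have e1 : q*(K*p - 1 - z.1) + q*z.1 + q = q*(K*p) := by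
            have e0 : (K*p - 1 - z.1) + z.1 + 1 = K*p := by omega
            calc q*(K*p - 1 - z.1) + q*z.1 + q = q*((K*p - 1 - z.1) + z.1 + 1) := by ring
              _ = q*(K*p) := by rw [e0]
          have e2 : q*(K*p) = K*p*q := by ring
          refine if_congr ?_ rfl rfl
          show p*z.2 + p ≤ q*z.1 ↔ q*(K*p - 1 - z.1) + p*z.2 + p + q ≤ K*p*q
          omega
      rw [hbij]
      ring
    · -- inductive step
      obtain ⟨c0, hab, hmax⟩ := D.exists_max_image (fun c => c.1 + c.2) hne
      obtain ⟨a, b⟩ := c0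
      have hra : (a+1, b) ∉ D := by
        intro h
        have := hmax _ h
        simp only at this
        omega
      have hcb : (a, b+1) ∉ D := by
        intro h
        have := hmax _ h
        simp only at this
        omega
      have hssub : D.erase (a,b) ⊂ D := Finset.erase_ssubset hab
      have hD'y : IsYoung (D.erase (a,b)) := young_erase hD hab hra hcb
      have hdiag' : ∀ c ∈ D.erase (a,b), q*c.1+p*c.2+p+q ≤ K*p*q :=
        fun c hc => hdiag c (Finset.mem_of_mem_erase hc)
      have hIH := ih (D.erase (a,b)) hssub hD'y hdiag'
      have rb : rlen D b = a + 1 := corner_rlen hD hab hra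
      have ca : clen D a = b + 1 := corner_clen hD hab hcb
      have r'b : rlen (D.erase (a,b)) b = a := by rw [rlen_erase_self hab, rb]; omega
      have c'a : clen (D.erase (a,b)) a = b := by rw [clen_erase_self hab, ca]; omega
      have haP : a < K*p := by have := rlen_le hD hq hdiag b; omega
      have hbQ : b < K*q := by have := clen_le hD hp hdiag a; omega
      have hTd := hdiag _ hab
      simp only at hTd
      -- difference of the two sums
      have hdiff : (∑ z ∈ (Finset.range (K*p)) ×ˢ (Finset.range (K*q)),
            Fval p q K z.1 z.2 (clen D z.1) (rlen D z.2))
          - (∑ z ∈ (Finset.range (K*p)) ×ˢ (Finset.range (K*q)),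
            Fval p q K z.1 z.2 (clen (D.erase (a,b)) z.1) (rlen (D.erase (a,b)) z.2)) = 0 := by
        rw [← Finset.sum_sub_distrib]
        set Gf : ℕ × ℕ → ℤ := fun z => Fval p q K z.1 z.2 (clen D z.1) (rlen D z.2)
          - Fval p q K z.1 z.2 (clen (D.erase (a,b)) z.1) (rlen (D.erase (a,b)) z.2) with hGf
        have hrestrict : ∑ z ∈ (Finset.range (K*p)) ×ˢ (Finset.range (K*q)), Gf z
            = ∑ z ∈ ((Finset.range (K*p)) ×ˢ (Finset.range (K*q))).filter
                (fun z => z.1 = a ∨ z.2 = b), Gf z := by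
          refine (Finset.sum_subset (Finset.filter_subset _ _) ?_).symm
          intro z hz hznot
          have h12 : ¬(z.1 = a ∨ z.2 = b) := fun h => hznot (Finset.mem_filter.2 ⟨hz, h⟩)
          push_neg at h12
          have h1 : z.1 ≠ a := h12.1
          have h2 : z.2 ≠ b := h12.2
          rw [hGf]
          simp only
          rw [clen_erase_ne h1, rlen_erase_ne h2, sub_self]
        have hsetsplit : ((Finset.range (K*p)) ×ˢ (Finset.range (K*q))).filter
              (fun z => z.1 = a ∨ z.2 = b)
            = ({a} ×ˢ Finset.range (K*q)) ∪ (((Finset.range (K*p)).erase a) ×ˢ {b}) := by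
          ext z
          simp only [Finset.mem_filter, Finset.mem_union, Finset.mem_product,
            Finset.mem_singleton, Finset.mem_erase, Finset.mem_range]
          omega
        have hdisj2 : Disjoint ({a} ×ˢ Finset.range (K*q))
            ((((Finset.range (K*p)).erase a)) ×ˢ {b}) := by
          rw [Finset.disjoint_left]
          intro z h1 h2
          rw [Finset.mem_product, Finset.mem_singleton] at h1
          rw [Finset.mem_product, Finset.mem_erase] at h2
          exact h2.1.1 h1.1
        rw [hrestrict, hsetsplit, Finset.sum_union hdisj2, Finset.sum_product,
          Finset.sum_singleton, Finset.sum_product]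
        have hsumb : ∀ x : ℕ, ∑ y ∈ ({b} : Finset ℕ), Gf (x, y) = Gf (x, b) :=
          fun x => Finset.sum_singleton _ _
        rw [Finset.sum_congr rfl (fun x _ => hsumb x)]
        -- piece 1 : column a
        have hsplitQ : Finset.range (K*q) = Finset.range (b+1) ∪ Finset.Ioo b (K*q) := by
          ext t
          simp only [Finset.mem_range, Finset.mem_union, Finset.mem_Ioo]
          omega
        have hdisjQ : Disjoint (Finset.range (b+1)) (Finset.Ioo b (K*q)) := by
          rw [Finset.disjoint_left]
          intro t h1 h2
          rw [Finset.mem_range] at h1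
          rw [Finset.mem_Ioo] at h2
          omega
        have hsplitP : (Finset.range (K*p)).erase a = Finset.range a ∪ Finset.Ioo a (K*p) := by
          ext t
          simp only [Finset.mem_erase, Finset.mem_range, Finset.mem_union, Finset.mem_Ioo]
          omega
        have hdisjP : Disjoint (Finset.range a) (Finset.Ioo a (K*p)) := by
          rw [Finset.disjoint_left]
          intro t h1 h2
          rw [Finset.mem_range] at h1
          rw [Finset.mem_Ioo] at h2
          omega
        rw [hsplitQ, Finset.sum_union hdisjQ, Finset.sum_range_succ, hsplitP,
          Finset.sum_union hdisjP]
        -- evaluate the five pieces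
        have hab_val : Gf (a, b) = 1 := by
          rw [hGf]
          show Fval p q K a b (clen D a) (rlen D b)
            - Fval p q K a b (clen (D.erase (a,b)) a) (rlen (D.erase (a,b)) b) = 1
          rw [ca, rb, c'a, r'b, Fval, Fval]
          simp only [mul_add, mul_one]
          split_ifs <;> omega
        have hylt : ∀ y ∈ Finset.range b, Gf (a, y)
            = ((if q*rlen D y + p*y < q*a + p*b + p + q then (1:ℤ) else 0)
              - (if q*rlen D y + p*y + p < q*a + p*b + p + q then 1 else 0)) := by
          intro y hy
          rw [Finset.mem_range] at hy
          rw [hGf]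
          show Fval p q K a y (clen D a) (rlen D y)
            - Fval p q K a y (clen (D.erase (a,b)) a) (rlen (D.erase (a,b)) y) = _
          rw [ca, c'a, rlen_erase_ne (by omega), Fval, Fval]
          simp only [mul_add, mul_one]
          split_ifs <;> omega
        have hygt : ∀ y ∈ Finset.Ioo b (K*q), Gf (a, y)
            = ((if q*rlen D y + p*y ≤ q*a + p*b then (1:ℤ) else 0)
              - (if q*rlen D y + p*y + p ≤ q*a + p*b then 1 else 0)) := by
          intro y hy
          rw [Finset.mem_Ioo] at hy
          rw [hGf]
          show Fval p q K a y (clen D a) (rlen D y)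
            - Fval p q K a y (clen (D.erase (a,b)) a) (rlen (D.erase (a,b)) y) = _
          rw [ca, c'a, rlen_erase_ne (by omega), Fval, Fval]
          simp only [mul_add, mul_one]
          split_ifs <;> omega
        have hxlt : ∀ x ∈ Finset.range a, Gf (x, b)
            = ((if q*x + p*clen D x + q ≤ q*a + p*b then (1:ℤ) else 0)
              - (if q*x + p*clen D x ≤ q*a + p*b then 1 else 0)) := by
          intro x hx
          rw [Finset.mem_range] at hx
          have hmem : (x, b) ∈ D := hD a b x b hab (by omega) le_rfl
          have hbc : b < clen D x := (mem_iff_clen hD x b).1 hmem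
          rw [hGf]
          show Fval p q K x b (clen D x) (rlen D b)
            - Fval p q K x b (clen (D.erase (a,b)) x) (rlen (D.erase (a,b)) b) = _
          rw [rb, r'b, clen_erase_ne (by omega), Fval, Fval]
          simp only [mul_add, mul_one]
          split_ifs <;> omega
        have hxgt : ∀ x ∈ Finset.Ioo a (K*p), Gf (x, b)
            = ((if q*x + p*clen D x + q < q*a + p*b + p + q then (1:ℤ) else 0)
              - (if q*x + p*clen D x < q*a + p*b + p + q then 1 else 0)) := by
          intro x hx
          rw [Finset.mem_Ioo] at hx
          have hnb : ¬ b < clen D x := by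
            intro h
            have hmem : (x, b) ∈ D := (mem_iff_clen hD x b).2 h
            exact hra (hD x b (a+1) b hmem (by omega) le_rfl)
          rw [hGf]
          show Fval p q K x b (clen D x) (rlen D b)
            - Fval p q K x b (clen (D.erase (a,b)) x) (rlen (D.erase (a,b)) b) = _
          rw [rb, r'b, clen_erase_ne (by omega), Fval, Fval]
          simp only [mul_add, mul_one]
          split_ifs <;> omega
        rw [Finset.sum_congr rfl hylt, Finset.sum_congr rfl hygt, hab_val,
          Finset.sum_congr rfl hxlt, Finset.sum_congr rfl hxgt]
        have hI := cor_eqI hD hp hq hdiag hab hra hcb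
        have hII := cor_eqII hD hp hq hdiag hab hra hcb
        linarith [hI, hII]
      linarith [hIH, hdiff]

end Core

end Mid

open Finset Mid in
set_option maxHeartbeats 1000000 in
theorem mid_identity (D : Finset (ℕ × ℕ)) (hD : IsYoung D)
    (p q K : ℕ) (hp : 0 < p) (hq : 0 < q) (hK : 0 < K) (hpq : Nat.Coprime p q)
    (hdiag : ∀ c ∈ D, q * c.1 + p * c.2 + p + q ≤ K * p * q) :
    ((D.filter fun c =>
        p * leg D c < q * (arm D c + 1) ∧ q * arm D c < p * (leg D c + 1)).card : ℤ)
      = (D.card : ℤ)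
        - ((D.filter fun c => q * (arm D c + 1) ≤ p * leg D c).card : ℤ)
        - ((((Finset.range (K * p)) ×ˢ (Finset.range (K * q))).filter
              fun c => c ∉ D ∧ p * (coLeg D c + 1) ≤ q * coArm D c).card : ℤ)
        + ((((Finset.range (K * p)) ×ˢ (Finset.range (K * q))).filter
              fun c => q * c.1 + p * c.2 + p + q ≤ K * p * q ∧ c ∉ D).card : ℤ) := by
  classical
  have hsubR : ∀ z ∈ D, z ∈ (Finset.range (K*p)) ×ˢ (Finset.range (K*q)) := by
    intro z hz
    have h := hdiag z hz
    rw [Finset.mem_product, Finset.mem_range, Finset.mem_range]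
    constructor
    · by_contra hx
      push_neg at hx
      have h2 : q*(K*p) ≤ q*z.1 := Nat.mul_le_mul_left q hx
      have e : q*(K*p) = K*p*q := by ring
      omega
    · by_contra hy
      push_neg at hy
      have h2 : p*(K*q) ≤ p*z.2 := Nat.mul_le_mul_left p hy
      have e : p*(K*q) = K*p*q := by ring
      omega
  -- partition of D
  have hpart : (D.filter fun c =>
        p * leg D c < q * (arm D c + 1) ∧ q * arm D c < p * (leg D c + 1)).card
      + ((D.filter fun c => q * (arm D c + 1) ≤ p * leg D c).card
        + (D.filter fun c => p * (leg D c + 1) ≤ q * arm D c).card) = D.card := by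
    have h3 := Finset.card_filter_add_card_filter_not
      (s := D) (p := fun c => p * leg D c < q * (arm D c + 1) ∧ q * arm D c < p * (leg D c + 1))
    have h1 : D.filter (fun c => ¬(p * leg D c < q * (arm D c + 1)
          ∧ q * arm D c < p * (leg D c + 1)))
        = (D.filter fun c => q * (arm D c + 1) ≤ p * leg D c)
          ∪ (D.filter fun c => p * (leg D c + 1) ≤ q * arm D c) := by
      ext c
      simp only [Finset.mem_filter, Finset.mem_union]
      constructor
      · rintro ⟨hc, h⟩
        rw [not_and_or, not_lt, not_lt] at h
        tauto
      · rintro (⟨hc, h⟩ | ⟨hc, h⟩) <;> exact ⟨hc, by omega⟩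
    have h2 : Disjoint (D.filter fun c => q * (arm D c + 1) ≤ p * leg D c)
        (D.filter fun c => p * (leg D c + 1) ≤ q * arm D c) := by
      rw [Finset.disjoint_left]
      intro c hc1 hc2
      rw [Finset.mem_filter] at hc1 hc2
      have e1 : q * (arm D c + 1) = q * arm D c + q := by ring
      have e2 : p * (leg D c + 1) = p * leg D c + p := by ring
      omega
    rw [h1, Finset.card_union_of_disjoint h2] at h3
    exact h3
  -- conversion of the B count
  have hBconv : (D.filter fun c => p * (leg D c + 1) ≤ q * arm D c)
      = ((Finset.range (K*p)) ×ˢ (Finset.range (K*q))).filter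
          (fun z => z.2 < clen D z.1 ∧ (q*z.1 + p*clen D z.1 + q ≤ q*rlen D z.2 + p*z.2)) := by
    ext z
    obtain ⟨x, y⟩ := z
    simp only [Finset.mem_filter]
    constructor
    · rintro ⟨hzD, hcond⟩
      have hR := hsubR _ hzD
      have hclt : y < clen D x := (mem_iff_clen hD x y).1 hzD
      have hrlt : x < rlen D y := (mem_iff_rlen hD x y).1 hzD
      refine ⟨hR, hclt, ?_⟩
      rw [show leg D (x,y) = clen D x - (y+1) from leg_eq hD x y,
        show arm D (x,y) = rlen D y - (x+1) from arm_eq hD x y] at hcond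
      have e1 : p * (clen D x - (y+1) + 1) = p * (clen D x - y) := by congr 1; omega
      have e2 : p * (clen D x - y) + p*y = p*clen D x := by rw [← Nat.mul_add]; congr 1; omega
      have e3 : q * (rlen D y - (x+1)) + q*(x+1) = q * rlen D y := by
        rw [← Nat.mul_add]; congr 1; omega
      have e4 : q*(x+1) = q*x + q := by ring
      omega
    · rintro ⟨hR, hclt, hcond⟩
      have hzD : (x,y) ∈ D := (mem_iff_clen hD x y).2 hclt
      have hrlt : x < rlen D y := (mem_iff_rlen hD x y).1 hzD
      refine ⟨hzD, ?_⟩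
      rw [show leg D (x,y) = clen D x - (y+1) from leg_eq hD x y,
        show arm D (x,y) = rlen D y - (x+1) from arm_eq hD x y]
      have e1 : p * (clen D x - (y+1) + 1) = p * (clen D x - y) := by congr 1; omega
      have e2 : p * (clen D x - y) + p*y = p*clen D x := by rw [← Nat.mul_add]; congr 1; omega
      have e3 : q * (rlen D y - (x+1)) + q*(x+1) = q * rlen D y := by
        rw [← Nat.mul_add]; congr 1; omega
      have e4 : q*(x+1) = q*x + q := by ring
      omega
  -- conversion of the C count
  have hCconv : (((Finset.range (K*p)) ×ˢ (Finset.range (K*q))).filter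
        fun c => c ∉ D ∧ p * (coLeg D c + 1) ≤ q * coArm D c)
      = ((Finset.range (K*p)) ×ˢ (Finset.range (K*q))).filter
          (fun z => ¬ z.2 < clen D z.1
            ∧ (q*rlen D z.2 + p*z.2 + p ≤ q*z.1 + p*clen D z.1)) := by
    apply Finset.filter_congr
    intro z hz
    obtain ⟨x, y⟩ := z
    dsimp only
    have hmemc := mem_iff_clen hD x y
    have hmemr := mem_iff_rlen hD x y
    constructor
    · rintro ⟨hnD, hcond⟩
      have hcge : clen D x ≤ y := by
        by_contra h
        push_neg at h
        exact hnD (hmemc.2 h)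
      have hrge : rlen D y ≤ x := by
        by_contra h
        push_neg at h
        exact hnD (hmemr.2 h)
      refine ⟨by omega, ?_⟩
      rw [show coLeg D (x,y) = y - clen D x from coLeg_eq hD x y,
        show coArm D (x,y) = x - rlen D y from coArm_eq hD x y] at hcond
      have e1 : p * (y - clen D x + 1) + p * clen D x = p*y + p := by
        rw [← Nat.mul_add]
        have : y - clen D x + 1 + clen D x = y + 1 := by omega
        rw [this]; ring
      have e2 : q * (x - rlen D y) + q * rlen D y = q*x := by
        rw [← Nat.mul_add]; congr 1; omega
      omega
    · rintro ⟨hnlt, hcond⟩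
      have hcge : clen D x ≤ y := by omega
      have hnD : (x,y) ∉ D := fun h => by have := hmemc.1 h; omega
      have hrge : rlen D y ≤ x := by
        by_contra h
        push_neg at h
        exact hnD (hmemr.2 h)
      refine ⟨hnD, ?_⟩
      rw [show coLeg D (x,y) = y - clen D x from coLeg_eq hD x y,
        show coArm D (x,y) = x - rlen D y from coArm_eq hD x y]
      have e1 : p * (y - clen D x + 1) + p * clen D x = p*y + p := by
        rw [← Nat.mul_add]
        have : y - clen D x + 1 + clen D x = y + 1 := by omega
        rw [this]; ring
      have e2 : q * (x - rlen D y) + q * rlen D y = q*x := by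
        rw [← Nat.mul_add]; congr 1; omega
      omega
  -- conversion of the E count
  have hEconv : (((Finset.range (K*p)) ×ˢ (Finset.range (K*q))).filter
        fun c => q * c.1 + p * c.2 + p + q ≤ K * p * q ∧ c ∉ D)
      = ((Finset.range (K*p)) ×ˢ (Finset.range (K*q))).filter
          (fun z => ¬ z.2 < clen D z.1 ∧ (q*z.1 + p*z.2 + p + q ≤ K*p*q)) := by
    apply Finset.filter_congr
    intro z hz
    obtain ⟨x, y⟩ := z
    dsimp only
    have hmemc := mem_iff_clen hD x y
    constructor
    · rintro ⟨hcond, hnD⟩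
      exact ⟨fun h => hnD (hmemc.2 h), hcond⟩
    · rintro ⟨hnlt, hcond⟩
      exact ⟨hcond, fun h => hnlt (hmemc.1 h)⟩
  -- the core identity
  have hcore := core hp hq hK D hD hdiag
  have hsum : ∑ z ∈ (Finset.range (K*p)) ×ˢ (Finset.range (K*q)),
        Fval p q K z.1 z.2 (clen D z.1) (rlen D z.2)
      = ((((Finset.range (K*p)) ×ˢ (Finset.range (K*q))).filter
            (fun z => ¬ z.2 < clen D z.1
              ∧ (q*rlen D z.2 + p*z.2 + p ≤ q*z.1 + p*clen D z.1))).card : ℤ)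
        - ((((Finset.range (K*p)) ×ˢ (Finset.range (K*q))).filter
            (fun z => z.2 < clen D z.1
              ∧ (q*z.1 + p*clen D z.1 + q ≤ q*rlen D z.2 + p*z.2))).card : ℤ)
        - ((((Finset.range (K*p)) ×ˢ (Finset.range (K*q))).filter
            (fun z => ¬ z.2 < clen D z.1 ∧ (q*z.1 + p*z.2 + p + q ≤ K*p*q))).card : ℤ) := by
    simp only [Fval]
    rw [Finset.sum_sub_distrib, Finset.sum_sub_distrib, Finset.sum_boole, Finset.sum_boole,
      Finset.sum_boole]
  rw [hsum] at hcore
  rw [hCconv, hEconv]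
  rw [hBconv] at hpart
  omega
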